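/- With W(t₁,t₂) as above, the diagonal function t ↦ W(−t, t) is strictly decreasing on (0, π), tends to −∞ as t → π⁻, is positive on (0, π/2], and therefore there exists a unique t* ∈ (π/2, π) with W(−t*, t*) = 0. -/

import Mathlib

open Real Set Filter Topology

noncomputable def xi (t : ℝ) : ℝ :=
  ∫ τ in (0:ℝ)..t, Real.sin τ ^ 2 / Real.sqrt (1 + Real.sin τ ^ 2)

noncomputable def W (t₁ t₂ : ℝ) : ℝ :=
  2 * (xi t₂ - xi t₁) + (Real.sin t₂ - Real.sin t₁) ^ 2 / (xi t₂ - xi t₁)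
    + Real.cos t₂ * Real.sqrt (1 + Real.sin t₂ ^ 2) / Real.sin t₂
    - Real.cos t₁ * Real.sqrt (1 + Real.sin t₁ ^ 2) / Real.sin t₁

lemma R_pos (t : ℝ) : 0 < Real.sqrt (1 + Real.sin t ^ 2) :=
  Real.sqrt_pos.2 (by positivity)

lemma R_sq (t : ℝ) : Real.sqrt (1 + Real.sin t ^ 2) ^ 2 = 1 + Real.sin t ^ 2 :=
  Real.sq_sqrt (by positivity)

lemma cont_integrand : Continuous fun τ : ℝ => Real.sin τ ^ 2 / Real.sqrt (1 + Real.sin τ ^ 2) := by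
  apply Continuous.div
  · fun_prop
  · fun_prop
  · exact fun x => (R_pos x).ne'

lemma hasDerivAt_xi (t : ℝ) :
    HasDerivAt xi (Real.sin t ^ 2 / Real.sqrt (1 + Real.sin t ^ 2)) t := by
  exact (intervalIntegral.integral_hasStrictDerivAt_right
    (cont_integrand.intervalIntegrable _ _)
    (cont_integrand.stronglyMeasurableAtFilter _ _)
    cont_integrand.continuousAt).hasDerivAt

lemma xi_cont : Continuous xi :=
  continuous_iff_continuousAt.2 fun t => (hasDerivAt_xi t).continuousAt

lemma xi_zero : xi 0 = 0 := intervalIntegral.integral_same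

lemma xi_neg (t : ℝ) : xi (-t) = - xi t := by
  have h := intervalIntegral.integral_comp_neg (a := (0:ℝ)) (b := t)
    (fun τ => Real.sin τ ^ 2 / Real.sqrt (1 + Real.sin τ ^ 2))
  simp only [Real.sin_neg, neg_sq, neg_zero] at h
  unfold xi
  rw [h, intervalIntegral.integral_symm]

lemma xi_pos {t : ℝ} (h0 : 0 < t) (hπ : t ≤ π) : 0 < xi t := by
  apply intervalIntegral.intervalIntegral_pos_of_pos_on (cont_integrand.intervalIntegrable _ _) _ h0
  intro x hx
  have hs : 0 < Real.sin x := Real.sin_pos_of_pos_of_lt_pi hx.1 (lt_of_lt_of_le hx.2 hπ)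
  positivity

noncomputable def fdiag (t : ℝ) : ℝ :=
  4 * xi t + 2 * Real.sin t ^ 2 / xi t
    + 2 * (Real.cos t * Real.sqrt (1 + Real.sin t ^ 2)) / Real.sin t

lemma W_diag (t : ℝ) : W (-t) t = fdiag t := by
  unfold W fdiag
  rw [xi_neg]
  simp only [Real.sin_neg, Real.cos_neg, neg_sq, sub_neg_eq_add]
  have h1 : xi t + xi t = 2 * xi t := by ring
  have h2 : (Real.sin t + Real.sin t) ^ 2 = 2 * (2 * Real.sin t ^ 2) := by ring
  rw [h1, h2, mul_div_mul_left _ _ (two_ne_zero)]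
  rw [div_neg]
  ring

lemma hasDerivAt_fdiag {t : ℝ} (hs : Real.sin t ≠ 0) (hxi : xi t ≠ 0) :
    HasDerivAt fdiag
      (-2 * (Real.sin t ^ 3 - Real.cos t * Real.sqrt (1 + Real.sin t ^ 2) * xi t) ^ 2
        / (Real.sqrt (1 + Real.sin t ^ 2) * xi t ^ 2 * Real.sin t ^ 2)) t := by
  have hS : HasDerivAt Real.sin (Real.cos t) t := Real.hasDerivAt_sin t
  have hC : HasDerivAt Real.cos (-Real.sin t) t := Real.hasDerivAt_cos t
  have h1 : HasDerivAt (fun t => 1 + Real.sin t ^ 2)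
      ((2:ℕ) * Real.sin t ^ 1 * Real.cos t) t := (hS.pow 2).const_add 1
  have hR := h1.sqrt (by positivity)
  have hX := hasDerivAt_xi t
  have t1 := hX.const_mul (4:ℝ)
  have t2 := ((hS.pow 2).const_mul (2:ℝ)).div hX hxi
  have t3 := ((hC.mul hR).const_mul (2:ℝ)).div hS hs
  have total := (t1.add t2).add t3
  convert total using 1
  · rfl
  · rfl
  · rfl
  simp only [Pi.pow_apply, Pi.mul_apply]
  have hr := R_sq t
  have hr0 := (R_pos t).ne'
  have hc2 : Real.cos t ^ 2 = 1 - Real.sin t ^ 2 := Real.cos_sq' t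
  set r := Real.sqrt (1 + Real.sin t ^ 2)
  field_simp
  linear_combination (2*(Real.sin t)^2*(xi t)^2) * hr - (2*(Real.sin t)^2*(xi t)^2) * hc2

lemma cont_g : Continuous (fun u => Real.sin u ^ 3
    - Real.cos u * Real.sqrt (1 + Real.sin u ^ 2) * xi u) := by
  apply (continuous_sin.pow 3).sub
  exact (continuous_cos.mul (Real.continuous_sqrt.comp
    (continuous_const.add (continuous_sin.pow 2)))).mul xi_cont

lemma hasDerivAt_g (t : ℝ) :
    HasDerivAt (fun u => Real.sin u ^ 3 - Real.cos u * Real.sqrt (1 + Real.sin u ^ 2) * xi u)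
      (2 * Real.sin t ^ 2 * Real.cos t
        + 2 * Real.sin t ^ 3 * xi t / Real.sqrt (1 + Real.sin t ^ 2)) t := by
  have hS : HasDerivAt Real.sin (Real.cos t) t := Real.hasDerivAt_sin t
  have hC : HasDerivAt Real.cos (-Real.sin t) t := Real.hasDerivAt_cos t
  have h1 : HasDerivAt (fun t => 1 + Real.sin t ^ 2)
      ((2:ℕ) * Real.sin t ^ 1 * Real.cos t) t := (hS.pow 2).const_add 1
  have hR := h1.sqrt (by positivity)
  have hX := hasDerivAt_xi t
  have total := (hS.pow 3).sub ((hC.mul hR).mul hX)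
  convert total using 1
  · rfl
  · rfl
  · rfl
  simp only [Pi.pow_apply, Pi.mul_apply]
  have hr := R_sq t
  have hr0 := (R_pos t).ne'
  have hc2 : Real.cos t ^ 2 = 1 - Real.sin t ^ 2 := Real.cos_sq' t
  set r := Real.sqrt (1 + Real.sin t ^ 2)
  field_simp
  ring_nf
  linear_combination (2*Real.sin t*xi t) * hc2 + (-2*Real.sin t*xi t) * hr

lemma key_ineq {t : ℝ} (ht : t ∈ Ioo 0 π) :
    Real.cos t * Real.sqrt (1 + Real.sin t ^ 2) * xi t < Real.sin t ^ 3 := by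
  have hsin : 0 < Real.sin t := Real.sin_pos_of_pos_of_lt_pi ht.1 ht.2
  have hxi : 0 < xi t := xi_pos ht.1 ht.2.le
  rcases le_or_gt (Real.cos t) 0 with hc | hc
  · have : Real.cos t * Real.sqrt (1 + Real.sin t ^ 2) * xi t ≤ 0 := by
      apply mul_nonpos_of_nonpos_of_nonneg _ hxi.le
      exact mul_nonpos_of_nonpos_of_nonneg hc (R_pos t).le
    calc Real.cos t * Real.sqrt (1 + Real.sin t ^ 2) * xi t ≤ 0 := this
      _ < Real.sin t ^ 3 := by positivity
  · -- cos t > 0 so t < π/2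
    have htlt : t < π / 2 := by
      by_contra h
      push_neg at h
      have : Real.cos t ≤ 0 := Real.cos_nonpos_of_pi_div_two_le_of_le h
        (by linarith [ht.2, Real.pi_pos])
      linarith
    have hmono : StrictMonoOn
        (fun u => Real.sin u ^ 3 - Real.cos u * Real.sqrt (1 + Real.sin u ^ 2) * xi u)
        (Icc 0 (π/2)) := by
      apply strictMonoOn_of_deriv_pos (convex_Icc _ _) cont_g.continuousOn
      intro x hx
      rw [interior_Icc] at hx
      rw [(hasDerivAt_g x).deriv]
      have hsx : 0 < Real.sin x := Real.sin_pos_of_pos_of_lt_pi hx.1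
        (by linarith [hx.2, Real.pi_pos])
      have hcx : 0 < Real.cos x := Real.cos_pos_of_mem_Ioo
        ⟨by linarith [hx.1, Real.pi_pos], hx.2⟩
      have hxx : 0 < xi x := xi_pos hx.1 (by linarith [hx.2, Real.pi_pos])
      have hrx := R_pos x
      positivity
    have h0 : (0:ℝ) ∈ Icc 0 (π/2) := ⟨le_refl _, by positivity⟩
    have ht' : t ∈ Icc 0 (π/2) := ⟨ht.1.le, htlt.le⟩
    have := hmono h0 ht' ht.1
    simpa [xi_zero] using this

lemma deriv_fdiag_neg {t : ℝ} (ht : t ∈ Ioo 0 π) : deriv fdiag t < 0 := by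
  have hsin : 0 < Real.sin t := Real.sin_pos_of_pos_of_lt_pi ht.1 ht.2
  have hxi : 0 < xi t := xi_pos ht.1 ht.2.le
  rw [(hasDerivAt_fdiag hsin.ne' hxi.ne').deriv]
  apply div_neg_of_neg_of_pos
  · have h := key_ineq ht
    have h2 : 0 < (Real.sin t ^ 3 - Real.cos t * Real.sqrt (1 + Real.sin t ^ 2) * xi t) ^ 2 :=
      pow_pos (by linarith) 2
    nlinarith
  · have := R_pos t
    positivity

lemma fdiag_contOn : ContinuousOn fdiag (Ioo 0 π) := by
  intro x hx
  have hsin : 0 < Real.sin x := Real.sin_pos_of_pos_of_lt_pi hx.1 hx.2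
  have hxi : 0 < xi x := xi_pos hx.1 hx.2.le
  exact ((hasDerivAt_fdiag hsin.ne' hxi.ne').continuousAt).continuousWithinAt

lemma fdiag_anti : StrictAntiOn fdiag (Ioo 0 π) := by
  apply strictAntiOn_of_deriv_neg (convex_Ioo _ _) fdiag_contOn
  intro x hx
  rw [interior_Ioo] at hx
  exact deriv_fdiag_neg hx

lemma fdiag_pos {t : ℝ} (ht : t ∈ Ioc 0 (π/2)) : 0 < fdiag t := by
  have hpi := Real.pi_pos
  have hsin : 0 < Real.sin t := Real.sin_pos_of_pos_of_lt_pi ht.1 (by linarith [ht.2])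
  have hxi : 0 < xi t := xi_pos ht.1 (by linarith [ht.2])
  have hcos : 0 ≤ Real.cos t := Real.cos_nonneg_of_mem_Icc ⟨by linarith [ht.1.le], ht.2⟩
  have hr := R_pos t
  unfold fdiag
  have h1 : 0 < 4 * xi t := by positivity
  have h2 : 0 < 2 * Real.sin t ^ 2 / xi t := by positivity
  have h3 : 0 ≤ 2 * (Real.cos t * Real.sqrt (1 + Real.sin t ^ 2)) / Real.sin t := by positivity
  linarith

lemma fdiag_tendsto : Tendsto fdiag (nhdsWithin π (Iio π)) atBot := by
  have hpi := Real.pi_pos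
  have hxpi : 0 < xi π := xi_pos hpi le_rfl
  have hca : ContinuousAt (fun t => 4 * xi t + 2 * Real.sin t ^ 2 / xi t) π := by
    apply ContinuousAt.add
    · exact continuousAt_const.mul xi_cont.continuousAt
    · exact ContinuousAt.div (continuousAt_const.mul ((continuous_sin.pow 2).continuousAt))
        xi_cont.continuousAt hxpi.ne'
  have h1 : Tendsto (fun t => 4 * xi t + 2 * Real.sin t ^ 2 / xi t)
      (nhdsWithin π (Iio π)) (nhds (4 * xi π + 2 * Real.sin π ^ 2 / xi π)) :=
    hca.tendsto.mono_left nhdsWithin_le_nhds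
  have h2 : Tendsto (fun t => 2 * (Real.cos t * Real.sqrt (1 + Real.sin t ^ 2)) / Real.sin t)
      (nhdsWithin π (Iio π)) atBot := by
    have hnum : Tendsto (fun t => 2 * (Real.cos t * Real.sqrt (1 + Real.sin t ^ 2)))
        (nhdsWithin π (Iio π)) (nhds (-2 : ℝ)) := by
      have : Continuous (fun t => 2 * (Real.cos t * Real.sqrt (1 + Real.sin t ^ 2))) := by
        exact continuous_const.mul (continuous_cos.mul (Real.continuous_sqrt.comp
          (continuous_const.add (continuous_sin.pow 2))))
      have := (this.continuousAt (x := π)).tendsto.mono_left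
        (nhdsWithin_le_nhds (s := Iio π))
      simpa [Real.cos_pi, Real.sin_pi] using this
    have hden : Tendsto (fun t => (Real.sin t)⁻¹) (nhdsWithin π (Iio π)) atTop := by
      apply tendsto_inv_nhdsGT_zero.comp
      rw [tendsto_nhdsWithin_iff]
      constructor
      · have := (Real.continuous_sin.continuousAt (x := π)).tendsto.mono_left
          (nhdsWithin_le_nhds (s := Iio π))
        simpa [Real.sin_pi] using this
      · filter_upwards [Ioo_mem_nhdsLT_of_mem
            (show π ∈ Ioc (π/2) π from ⟨by linarith, le_rfl⟩)] with x hx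
        exact Real.sin_pos_of_pos_of_lt_pi (by linarith [hx.1]) hx.2
    have := hnum.neg_mul_atTop (by norm_num) hden
    simpa [div_eq_mul_inv] using this
  unfold fdiag
  exact h1.add_atBot h2

theorem W_diagonal :
    StrictAntiOn (fun t => W (-t) t) (Ioo 0 π) ∧
    Tendsto (fun t => W (-t) t) (nhdsWithin π (Iio π)) atBot ∧
    (∀ t ∈ Ioc 0 (π/2), 0 < W (-t) t) ∧
    (∃! t : ℝ, t ∈ Ioo (π/2) π ∧ W (-t) t = 0) := by
  have hpi := Real.pi_pos
  simp only [W_diag]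
  refine ⟨fdiag_anti, fdiag_tendsto, fun t ht => fdiag_pos ht, ?_⟩
  -- pick b ∈ Ioo (π/2) π with fdiag b < 0
  have hev : ∀ᶠ b in nhdsWithin π (Iio π), fdiag b < 0 ∧ b ∈ Ioo (π/2) π := by
    refine (fdiag_tendsto.eventually (eventually_lt_atBot 0)).and ?_
    exact Ioo_mem_nhdsLT_of_mem (show π ∈ Ioc (π/2) π from ⟨by linarith, le_rfl⟩)
  obtain ⟨b, hbneg, hbmem⟩ := hev.exists
  have hhalf : π / 2 ∈ Ioo 0 π := ⟨by linarith, by linarith⟩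
  have hposhalf : 0 < fdiag (π/2) := fdiag_pos ⟨by linarith, le_rfl⟩
  have hsub : Icc (π/2) b ⊆ Ioo 0 π := fun x hx =>
    ⟨by linarith [hx.1], lt_of_le_of_lt hx.2 hbmem.2⟩
  have hconts : ContinuousOn fdiag (Icc (π/2) b) := fdiag_contOn.mono hsub
  have hivt := intermediate_value_Icc' (le_of_lt hbmem.1) hconts
  have h0mem : (0:ℝ) ∈ Icc (fdiag b) (fdiag (π/2)) := ⟨hbneg.le, hposhalf.le⟩
  obtain ⟨c, hcmem, hc0⟩ := hivt h0mem
  have hcne1 : c ≠ π/2 := by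
    intro h; rw [h] at hc0; linarith [hposhalf, hc0]
  have hcne2 : c ≠ b := by
    intro h; rw [h] at hc0; linarith [hbneg, hc0]
  have hcIoo : c ∈ Ioo (π/2) π :=
    ⟨lt_of_le_of_ne hcmem.1 (Ne.symm hcne1),
     lt_of_lt_of_le (lt_of_le_of_ne hcmem.2 hcne2) hbmem.2.le⟩
  refine ⟨c, ⟨hcIoo, hc0⟩, ?_⟩
  rintro y ⟨hyIoo, hy0⟩
  have hy' : y ∈ Ioo 0 π := ⟨by linarith [hyIoo.1], hyIoo.2⟩
  have hc' : c ∈ Ioo 0 π := ⟨by linarith [hcIoo.1], hcIoo.2⟩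
  exact fdiag_anti.injOn hy' hc' (by rw [hy0, hc0])
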